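/- For every natural number n there exists a digraph G with positive integer arc weights Π such that (G,Π) has exactly n weighted 2-realizations. -/

import Mathlib

/-- Number of positions `k` with `x_k = u` and `x_{k+1} = v`. -/
def arcCount {V : Type*} [DecidableEq V] (x : List V) (u v : V) : ℕ :=
  ((Finset.range x.length).filter fun k => x[k]? = some u ∧ x[k + 1]? = some v).card

/-- `x` is a weighted 2-realization of the weighted digraph on vertex set `V` whose arcs are
the pairs `(u,v)` with `π u v > 0`, carrying weight `π u v`. -/
def IsWRealizationD {V : Type*} [DecidableEq V] (π : V → V → ℕ) (x : List V) : Prop :=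
  x ≠ [] ∧ (∀ v : V, v ∈ x) ∧ ∀ u v : V, π u v = arcCount x u v

open Fin.NatCast Fin.CommRing

/-- weights of the directed `n`-cycle -/
def cyc (n : ℕ) [NeZero n] : Fin n → Fin n → ℕ := fun u v => if v = u + 1 then 1 else 0

/-- the rotation starting at `r` -/
def rot (n : ℕ) [NeZero n] (r : Fin n) : List (Fin n) :=
  (List.range (n + 1)).map (fun (k : ℕ) => r + (k : Fin n))

lemma rot_length (n : ℕ) [NeZero n] (r : Fin n) : (rot n r).length = n + 1 := by
  rw [rot, List.length_map, List.length_range]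

lemma rot_getElem? (n : ℕ) [NeZero n] (r : Fin n) (k : ℕ) :
    (rot n r)[k]? = if k < n + 1 then some (r + (k : Fin n)) else none := by
  rw [rot, List.getElem?_map]
  by_cases h : k < n + 1
  · rw [if_pos h, List.getElem?_eq_getElem (by simpa using h)]
    simp
  · rw [if_neg h, List.getElem?_eq_none (by simpa using Nat.le_of_not_lt h)]
    rfl

lemma rot_realizes (n : ℕ) [NeZero n] (r : Fin n) : IsWRealizationD (cyc n) (rot n r) := by
  have hn : 0 < n := Nat.pos_of_ne_zero (NeZero.ne n)
  refine ⟨?_, ?_, ?_⟩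
  · intro h
    have := congrArg List.length h
    rw [rot_length] at this
    simp at this
  · intro v
    rw [rot]
    refine List.mem_map.mpr ⟨(v - r).val, List.mem_range.mpr ?_, ?_⟩
    · exact (v - r).isLt.trans (Nat.lt_succ_self n)
    · rw [Fin.cast_val_eq_self]; ring
  · intro u v
    have hfil : ((Finset.range (rot n r).length).filter
        fun k => (rot n r)[k]? = some u ∧ (rot n r)[k + 1]? = some v)
        = if v = u + 1 then {(u - r).val} else ∅ := by
      ext k
      simp only [Finset.mem_filter, Finset.mem_range, rot_length, rot_getElem?]
      constructor
      · rintro ⟨hk, h1, h2⟩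
        rw [if_pos hk] at h1
        have hk' : k < n := by
          by_contra h
          have : k = n := by omega
          subst this
          simp at h2
        rw [if_pos (by omega)] at h2
        have hu : r + (k : Fin n) = u := by exact_mod_cast Option.some_injective _ h1
        have hv : r + ((k+1 : ℕ) : Fin n) = v := by exact_mod_cast Option.some_injective _ h2
        have hcast : ((k+1 : ℕ) : Fin n) = (k : Fin n) + 1 := by push_cast; ring
        have hvu : v = u + 1 := by rw [← hu, ← hv, hcast]; ring
        rw [if_pos hvu]
        have : ((u - r).val : Fin n) = (k : Fin n) := by
          rw [Fin.cast_val_eq_self, ← hu]; ring_nf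
        have := congrArg Fin.val this
        rw [Fin.val_natCast, Fin.val_natCast, Nat.mod_eq_of_lt (by omega),
          Nat.mod_eq_of_lt (by omega)] at this
        simp [this]
      · intro hk
        split at hk
        · next hvu =>
          simp only [Finset.mem_singleton] at hk
          subst hk
          have hlt : (u - r).val < n := (u - r).isLt
          refine ⟨by omega, ?_, ?_⟩
          · rw [if_pos (by omega), Fin.cast_val_eq_self]
            congr 1; ring
          · rw [if_pos (by omega)]
            have hcast : (((u - r).val + 1 : ℕ) : Fin n) = ((u - r).val : Fin n) + 1 := by
              push_cast; ring
            rw [hcast, Fin.cast_val_eq_self, hvu]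
            congr 1; ring
        · simp at hk
    rw [arcCount, hfil, cyc]
    split <;> simp

lemma realizes_eq_rot (n : ℕ) [NeZero n] (x : List (Fin n))
    (hx : IsWRealizationD (cyc n) x) : ∃ r, x = rot n r := by
  have hn : 0 < n := Nat.pos_of_ne_zero (NeZero.ne n)
  obtain ⟨hne, hmem, harc⟩ := hx
  have hm : 0 < x.length := List.length_pos_iff.mpr hne
  -- step lemma
  have step : ∀ k, (h : k + 1 < x.length) → x[k + 1] = x[k]'(by omega) + 1 := by
    intro k h
    by_contra hv
    have h0 : cyc n (x[k]'(by omega)) (x[k+1]) = 0 := by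
      rw [cyc, if_neg (by exact fun hh => hv hh)]
    have := harc (x[k]'(by omega)) (x[k+1])
    rw [h0] at this
    have hk : k ∈ (Finset.range x.length).filter
        fun j => x[j]? = some (x[k]'(by omega)) ∧ x[j + 1]? = some (x[k+1]) := by
      simp [Finset.mem_filter, List.getElem?_eq_getElem, h, Nat.lt_of_succ_lt h]
    rw [arcCount] at this
    have := Finset.card_pos.mpr ⟨k, hk⟩
    omega
  set r : Fin n := x[0] with hr
  have form : ∀ k, (h : k < x.length) → x[k] = r + (k : Fin n) := by
    intro k
    induction k with
    | zero => intro h; simp [hr]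
    | succ k ih =>
      intro h
      rw [step k h, ih (by omega)]
      have : ((k+1 : ℕ) : Fin n) = (k : Fin n) + 1 := by push_cast; ring
      rw [this]; ring
  -- length bounds
  have hub : x.length ≤ n + 1 := by
    by_contra h
    push_neg at h
    have h1 : x.length ≥ n + 2 := h
    have hmemf : ∀ j ∈ ({0, n} : Finset ℕ), j ∈ (Finset.range x.length).filter
        fun k => x[k]? = some r ∧ x[k + 1]? = some (r + 1) := by
      intro j hj
      simp only [Finset.mem_insert, Finset.mem_singleton] at hj
      rcases hj with rfl | rfl <;>
      · refine Finset.mem_filter.mpr ⟨Finset.mem_range.mpr (by omega), ?_, ?_⟩ <;>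
        · rw [List.getElem?_eq_getElem (by omega), form _ (by omega)]
          push_cast
          simp
    have hsub := Finset.card_le_card (Finset.insert_subset_iff.mpr
      ⟨hmemf 0 (by simp), Finset.singleton_subset_iff.mpr (hmemf n (by simp))⟩)
    rw [Finset.card_insert_of_notMem (by simp; omega), Finset.card_singleton] at hsub
    have := harc r (r + 1)
    rw [cyc, if_pos rfl, arcCount] at this
    omega
  have hlb : n + 1 ≤ x.length := by
    have h1 := harc (r + ((n - 1 : ℕ) : Fin n)) (r + ((n - 1 : ℕ) : Fin n) + 1)
    rw [cyc, if_pos rfl, arcCount] at h1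
    have hpos : 0 < ((Finset.range x.length).filter
        fun k => x[k]? = some (r + ((n - 1 : ℕ) : Fin n)) ∧
          x[k + 1]? = some (r + ((n - 1 : ℕ) : Fin n) + 1)).card := by omega
    obtain ⟨k, hk⟩ := Finset.card_pos.mp hpos
    simp only [Finset.mem_filter, Finset.mem_range] at hk
    obtain ⟨hk1, hk2, hk3⟩ := hk
    have hk1' : k + 1 < x.length := by
      by_contra hh
      rw [List.getElem?_eq_none (by omega)] at hk3
      simp at hk3
    rw [List.getElem?_eq_getElem hk1, form _ hk1] at hk2
    have : ((k : ℕ) : Fin n) = ((n - 1 : ℕ) : Fin n) := by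
      have := Option.some_injective _ hk2
      exact add_left_cancel this
    have := congrArg Fin.val this
    rw [Fin.val_natCast, Fin.val_natCast] at this
    have hle := Nat.mod_le k n
    have hmod : (n - 1) % n = n - 1 := Nat.mod_eq_of_lt (by omega)
    omega
  have hlen : x.length = n + 1 := le_antisymm hub hlb
  refine ⟨r, List.ext_getElem (by rw [hlen, rot_length]) ?_⟩
  intro k h1 h2
  rw [form k h1]
  have : (rot n r)[k]? = some ((rot n r)[k]) := List.getElem?_eq_getElem h2
  rw [rot_getElem?, if_pos (by rw [rot_length] at h2; omega)] at this
  exact (Option.some_injective _ this)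

lemma rot_injective (n : ℕ) [NeZero n] : Function.Injective (rot n) := by
  intro a b hab
  have := congrArg (fun l => l[0]?) hab
  simp only [rot_getElem?, if_pos (Nat.succ_pos n)] at this
  simpa using this

theorem stmt9 (n : ℕ) :
    ∃ (N : ℕ) (π : Fin N → Fin N → ℕ),
      {x : List (Fin N) | IsWRealizationD π x}.Finite ∧
      {x : List (Fin N) | IsWRealizationD π x}.ncard = n := by
  rcases Nat.eq_zero_or_pos n with rfl | hn
  · refine ⟨0, fun _ _ => 0, ?_⟩
    have : {x : List (Fin 0) | IsWRealizationD (fun _ _ => 0) x} = ∅ := by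
      ext x
      simp only [Set.mem_setOf_eq, Set.mem_empty_iff_false, iff_false]
      rintro ⟨hne, -, -⟩
      match x with
      | [] => exact hne rfl
      | a :: _ => exact a.elim0
    rw [this]
    exact ⟨Set.finite_empty, Set.ncard_empty _⟩
  · haveI : NeZero n := ⟨by omega⟩
    refine ⟨n, cyc n, ?_⟩
    have hset : {x : List (Fin n) | IsWRealizationD (cyc n) x} = Set.range (rot n) := by
      ext x
      simp only [Set.mem_setOf_eq, Set.mem_range]
      exact ⟨fun h => (realizes_eq_rot n x h).imp (fun r hr => hr.symm),
        fun ⟨r, hr⟩ => hr ▸ rot_realizes n r⟩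
    rw [hset]
    refine ⟨Set.finite_range _, ?_⟩
    have : Set.range (rot n) = rot n '' Set.univ := by rw [Set.image_univ]
    rw [this, Set.ncard_image_of_injective _ (rot_injective n), Set.ncard_univ]
    simp
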